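/- Let x_1,...,x_n and y_1,...,y_n be real numbers, p(x) = Π(x−x_j) with coefficients c_0,...,c_n and q(x) = Π(x−y_j) with coefficients d_0,...,d_n. Define m_k = Σ_j x_j^k − Σ_j y_j^k for k = 1,...,2n, m̃ = (0, m_1,...,m_{2n})^T, and let ã ∈ R^{2n+1} with first component 1 solve T(m̃)ã = Λã, where Λ = diag(0,...,2n). Let c = (c_n,...,c_0,0,...,0)^T and d = (d_n,...,d_0,0,...,0)^T in R^{2n+1}. Then T(ã)c = d. -/

import Mathlib

open Matrix Finset

/-- Lower triangular Toeplitz matrix generated by a vector. -/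
def LTT {n : ℕ} (x : Fin n → ℝ) : Matrix (Fin n) (Fin n) ℝ :=
  Matrix.of fun i j =>
    if h : (j : ℕ) ≤ (i : ℕ) then
      x ⟨(i : ℕ) - (j : ℕ), Nat.lt_of_le_of_lt (Nat.sub_le _ _) i.isLt⟩
    else 0

/-- The diagonal matrix diag(0,1,...,n-1). -/
def Lam (n : ℕ) : Matrix (Fin n) (Fin n) ℝ :=
  Matrix.diagonal fun i => (i : ℝ)

open PowerSeries

noncomputable def Sg (r : ℝ) : ℝ⟦X⟧ := PowerSeries.mk fun k => if k = 0 then 0 else r ^ k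

lemma Sg_mul (r : ℝ) : Sg r * (1 - PowerSeries.C r * X) = PowerSeries.C r * X := by
  ext k
  rw [mul_sub, mul_one]
  rcases k with _ | k
  · simp [Sg]
  · rw [map_sub, mul_comm (PowerSeries.C r) X, ← mul_assoc,
      mul_comm (Sg r * X), mul_comm (X : ℝ⟦X⟧), ← mul_assoc, mul_comm (PowerSeries.C r),
      coeff_succ_mul_X, coeff_succ_mul_X, mul_comm (Sg r), PowerSeries.coeff_C_mul, PowerSeries.coeff_C]
    rcases k with _ | k
    · simp [Sg]
    · simp [Sg, pow_succ, mul_comm]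

lemma lderiv_single (r : ℝ) : (X : ℝ⟦X⟧) * d⁄dX ℝ (1 - PowerSeries.C r * X)
    = -(Sg r) * (1 - PowerSeries.C r * X) := by
  have h : d⁄dX ℝ (1 - PowerSeries.C r * X) = -(PowerSeries.C r) := by simp
  rw [h, neg_mul, Sg_mul, mul_neg, mul_comm]

lemma lderiv_prod {ι : Type} [DecidableEq ι] (s : Finset ι) (f : ι → ℝ) :
    (X : ℝ⟦X⟧) * d⁄dX ℝ (∏ j ∈ s, (1 - PowerSeries.C (f j) * X))
      = -(∑ j ∈ s, Sg (f j)) * ∏ j ∈ s, (1 - PowerSeries.C (f j) * X) := by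
  induction s using Finset.induction with
  | empty => simp
  | @insert j s hj ih =>
    rw [Finset.prod_insert hj, Finset.sum_insert hj, Derivation.leibniz, smul_eq_mul,
      smul_eq_mul, mul_add]
    have h1 : (X : ℝ⟦X⟧) * ((1 - PowerSeries.C (f j) * X) * d⁄dX ℝ (∏ k ∈ s, (1 - PowerSeries.C (f k) * X)))
        = (1 - PowerSeries.C (f j) * X) * ((-∑ k ∈ s, Sg (f k)) * ∏ k ∈ s, (1 - PowerSeries.C (f k) * X)) := by
      rw [← ih]; ring
    have h2 : (X : ℝ⟦X⟧) * ((∏ k ∈ s, (1 - PowerSeries.C (f k) * X)) * d⁄dX ℝ (1 - PowerSeries.C (f j) * X))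
        = (∏ k ∈ s, (1 - PowerSeries.C (f k) * X)) * (-(Sg (f j)) * (1 - PowerSeries.C (f j) * X)) := by
      rw [← lderiv_single]; ring
    rw [h1, h2]; ring

lemma Sg_coeff (r : ℝ) (k : ℕ) : PowerSeries.coeff k (Sg r) = if k = 0 then 0 else r ^ k := by
  simp [Sg]

lemma rev_coeff {n : ℕ} (x : Fin n → ℝ) (cc : ℕ → ℝ)
    (hp : ∀ t : ℝ, ∏ j, (t - x j) = ∑ i ∈ Finset.range (n + 1), cc i * t ^ i) :
    ∀ k : ℕ, PowerSeries.coeff k (∏ j, (1 - PowerSeries.C (x j) * X))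
      = if k ≤ n then cc (n - k) else 0 := by
  intro k
  set P : Polynomial ℝ := ∏ j, (Polynomial.X - Polynomial.C (x j)) with hP
  set Q : Polynomial ℝ := ∑ i ∈ Finset.range (n + 1), Polynomial.C (cc i) * Polynomial.X ^ i with hQ
  have hPQ : P = Q := by
    apply Polynomial.funext
    intro t
    simp only [hP, hQ, Polynomial.eval_prod, Polynomial.eval_sub, Polynomial.eval_X,
      Polynomial.eval_C, Polynomial.eval_finset_sum, Polynomial.eval_mul, Polynomial.eval_pow]
    exact hp t
  set Cp : Polynomial ℝ := ∏ j, (1 - Polynomial.C (x j) * Polynomial.X) with hCp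
  set R : Polynomial ℝ := ∑ i ∈ Finset.range (n + 1), Polynomial.C (cc (n - i)) * Polynomial.X ^ i with hR
  have hCR : Cp = R := by
    apply Polynomial.eq_of_infinite_eval_eq
    apply Set.Infinite.mono (s := {t : ℝ | t ≠ 0})
    swap
    · exact Set.Finite.infinite_compl (Set.finite_singleton 0)
    intro t ht
    have ht' : (t : ℝ) ≠ 0 := ht
    have e1 : Polynomial.eval t Cp = ∏ j, (1 - x j * t) := by
      simp [hCp, Polynomial.eval_prod]
    have e2 : ∏ j, (1 - x j * t) = t ^ n * ∏ j, (t⁻¹ - x j) := by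
      have hpc : (t:ℝ)^n = ∏ _j : Fin n, t := by simp
      rw [hpc, ← Finset.prod_mul_distrib]
      apply Finset.prod_congr rfl
      intro j _
      field_simp
    have e3 : (t:ℝ) ^ n * ∑ i ∈ Finset.range (n+1), cc i * (t⁻¹) ^ i
        = ∑ i ∈ Finset.range (n+1), cc (n - i) * t ^ i := by
      rw [Finset.mul_sum]
      rw [← Finset.sum_range_reflect]
      apply Finset.sum_congr rfl
      intro i hi
      rw [Finset.mem_range, Nat.lt_succ_iff] at hi
      have : n + 1 - 1 - i = n - i := by omega
      rw [this]
      have h2 : (t:ℝ) ^ n * (t⁻¹) ^ (n - i) = t ^ i := by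
        rw [inv_pow, ← pow_sub₀ _ ht' (by omega : n - i ≤ n)]
        congr 1; omega
      rw [← mul_assoc, mul_comm ((t:ℝ)^n), mul_assoc, h2]
    calc Polynomial.eval t Cp = t ^ n * Polynomial.eval t⁻¹ P := by
            rw [e1, e2, hP, Polynomial.eval_prod]; simp
      _ = t ^ n * Polynomial.eval t⁻¹ Q := by rw [hPQ]
      _ = Polynomial.eval t R := by
            rw [hQ, hR]
            simp only [Polynomial.eval_finset_sum, Polynomial.eval_mul, Polynomial.eval_pow,
              Polynomial.eval_C, Polynomial.eval_X]
            exact e3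
  have hcoe : ((Cp : Polynomial ℝ) : ℝ⟦X⟧) = ∏ j, (1 - PowerSeries.C (x j) * X) := by
    rw [hCp]
    rw [← Polynomial.coeToPowerSeries.ringHom_apply, map_prod]
    apply Finset.prod_congr rfl
    intro j _
    simp [Polynomial.coeToPowerSeries.ringHom_apply]
  rw [← hcoe, Polynomial.coeff_coe, hCR, hR]
  simp only [Polynomial.finset_sum_coeff, Polynomial.coeff_C_mul, Polynomial.coeff_X_pow,
    mul_ite, mul_one, mul_zero]
  rw [Finset.sum_ite_eq (Finset.range (n+1)) k]
  simp [Nat.lt_succ_iff]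

def padZ{N : ℕ} (v : Fin N → ℝ) : ℕ → ℝ := fun k => if h : k < N then v ⟨k, h⟩ else 0

lemma LTT_mulVec {N : ℕ} (v u : Fin N → ℝ) (i : Fin N) :
    (LTT v *ᵥ u) i = ∑ j ∈ Finset.range (i.val + 1), padZ v (i.val - j) * padZ u j := by
  have hterm : ∀ j : Fin N, LTT v i j * u j
      = (fun k : ℕ => if k ≤ i.val then padZ v (i.val - k) * padZ u k else 0) j.val := by
    intro j
    simp only [LTT, Matrix.of_apply, padZ]
    by_cases hj : j.val ≤ i.val
    · rw [dif_pos hj, if_pos hj, dif_pos (Nat.lt_of_le_of_lt (Nat.sub_le _ _) i.isLt),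
        dif_pos j.isLt]
    · rw [dif_neg hj, if_neg hj, zero_mul]
  have : (LTT v *ᵥ u) i = ∑ j : Fin N,
      (fun k : ℕ => if k ≤ i.val then padZ v (i.val - k) * padZ u k else 0) j.val := by
    rw [Matrix.mulVec, dotProduct]
    exact Finset.sum_congr rfl fun j _ => hterm j
  rw [this, Fin.sum_univ_eq_sum_range (fun k : ℕ => if k ≤ i.val then padZ v (i.val - k) * padZ u k else 0) N]
  rw [← Finset.sum_subset (Finset.range_subset_range.2 i.isLt)]
  · exact Finset.sum_congr rfl fun j hj => if_pos (Nat.lt_succ_iff.mp (Finset.mem_range.mp hj))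
  · intro j _ hj
    exact if_neg (fun hle => hj (Finset.mem_range.mpr (Nat.lt_succ_iff.mpr hle)))

theorem Ta_c_eq_d {n : ℕ} (x y : Fin n → ℝ) (cc dd : ℕ → ℝ)
    (hp : ∀ t : ℝ, ∏ j, (t - x j) = ∑ i ∈ Finset.range (n + 1), cc i * t ^ i)
    (hq : ∀ t : ℝ, ∏ j, (t - y j) = ∑ i ∈ Finset.range (n + 1), dd i * t ^ i)
    (mt : Fin (2 * n + 1) → ℝ)
    (hm0 : mt 0 = 0)
    (hmk : ∀ k : Fin (2 * n + 1), (k : ℕ) ≠ 0 →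
      mt k = (∑ j, x j ^ (k : ℕ)) - ∑ j, y j ^ (k : ℕ))
    (a : Fin (2 * n + 1) → ℝ) (ha0 : a 0 = 1)
    (ha : LTT mt *ᵥ a = Lam (2 * n + 1) *ᵥ a)
    (c d : Fin (2 * n + 1) → ℝ)
    (hc : ∀ i : Fin (2 * n + 1), c i = if (i : ℕ) ≤ n then cc (n - (i : ℕ)) else 0)
    (hd : ∀ i : Fin (2 * n + 1), d i = if (i : ℕ) ≤ n then dd (n - (i : ℕ)) else 0) :
    LTT a *ᵥ c = d := by
  classical
  set CS : ℝ⟦X⟧ := ∏ j, (1 - PowerSeries.C (x j) * X) with hCS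
  set DS : ℝ⟦X⟧ := ∏ j, (1 - PowerSeries.C (y j) * X) with hDS
  have hCSc : ∀ k : ℕ, PowerSeries.coeff k CS = if k ≤ n then cc (n - k) else 0 :=
    rev_coeff x cc hp
  have hDSc : ∀ k : ℕ, PowerSeries.coeff k DS = if k ≤ n then dd (n - k) else 0 :=
    rev_coeff y dd hq
  have hCS0 : constantCoeff CS = 1 := by
    rw [hCS, map_prod]
    apply Finset.prod_eq_one
    intro j _
    simp
  have hDS0 : constantCoeff DS = 1 := by
    rw [hDS, map_prod]
    apply Finset.prod_eq_one
    intro j _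
    simp
  have hCSne : CS ≠ 0 := by
    intro h; rw [h] at hCS0; simp at hCS0
  set B : ℝ⟦X⟧ := CS⁻¹ * DS with hB
  have hBCS : CS * B = DS := by
    rw [hB, ← mul_assoc, PowerSeries.mul_inv_cancel _ (by rw [hCS0]; norm_num), one_mul]
  set MS : ℝ⟦X⟧ := (∑ j, Sg (x j)) - ∑ j, Sg (y j) with hMS
  have hMSc : ∀ k : ℕ, PowerSeries.coeff k MS
      = if k = 0 then 0 else (∑ j, x j ^ k) - ∑ j, y j ^ k := by
    intro k
    rw [hMS, map_sub, map_sum, map_sum]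
    simp only [Sg_coeff]
    split <;> simp
  have hXdB : (X : ℝ⟦X⟧) * d⁄dX ℝ B = MS * B := by
    have hC' : (X : ℝ⟦X⟧) * d⁄dX ℝ CS = -(∑ j, Sg (x j)) * CS := lderiv_prod _ _
    have hD' : (X : ℝ⟦X⟧) * d⁄dX ℝ DS = -(∑ j, Sg (y j)) * DS := lderiv_prod _ _
    have hD := congrArg (d⁄dX ℝ) hBCS
    rw [Derivation.leibniz, smul_eq_mul, smul_eq_mul] at hD
    apply mul_left_cancel₀ hCSne
    calc CS * ((X : ℝ⟦X⟧) * d⁄dX ℝ B)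
        = X * (CS * d⁄dX ℝ B + B * d⁄dX ℝ CS) - B * (X * d⁄dX ℝ CS) := by ring
      _ = X * d⁄dX ℝ DS - B * (X * d⁄dX ℝ CS) := by rw [hD]
      _ = -(∑ j, Sg (y j)) * DS - B * (-(∑ j, Sg (x j)) * CS) := by rw [hC', hD']
      _ = -(∑ j, Sg (y j)) * (CS * B) - B * (-(∑ j, Sg (x j)) * CS) := by rw [hBCS]
      _ = CS * (MS * B) := by rw [hMS]; ring
  clear_value B MS CS DS
  set b : ℕ → ℝ := fun k => PowerSeries.coeff k B with hb
  have hb0 : b 0 = 1 := by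
    have h := congrArg (constantCoeff) hBCS
    rw [_root_.map_mul, hCS0, hDS0, one_mul] at h
    simpa [hb, PowerSeries.coeff_zero_eq_constantCoeff] using h
  have hbrec : ∀ k : ℕ, ((k : ℝ) + 1) * b (k + 1)
      = ∑ j ∈ Finset.range (k + 2), PowerSeries.coeff j MS * b (k + 1 - j) := by
    intro k
    have h := congrArg (PowerSeries.coeff (k + 1)) hXdB
    rw [mul_comm (X : ℝ⟦X⟧), PowerSeries.coeff_succ_mul_X, PowerSeries.coeff_derivative,
      PowerSeries.coeff_mul, Finset.Nat.sum_antidiagonal_eq_sum_range_succ_mk] at h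
    rw [← h, hb]
    push_cast
    ring
  have key : ∀ k : ℕ, ∀ h : k < 2 * n + 1, a ⟨k, h⟩ = b k := by
    intro k
    induction k using Nat.strong_induction_on with
    | _ k ih =>
      intro h
      cases k with
      | zero =>
        have h0 : (⟨0, h⟩ : Fin (2 * n + 1)) = 0 := by
          apply Fin.ext; simp
        rw [h0, ha0, hb0]
      | succ k =>
        have hEq := congrFun ha ⟨k + 1, h⟩
        rw [LTT_mulVec] at hEq
        have hR : (Lam (2 * n + 1) *ᵥ a) ⟨k + 1, h⟩ = ((k : ℝ) + 1) * a ⟨k + 1, h⟩ := by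
          rw [Lam, Matrix.mulVec_diagonal]
          norm_num
        rw [hR] at hEq
        have hL : ∑ j ∈ Finset.range (k + 1 + 1), padZ mt ((⟨k+1,h⟩ : Fin (2*n+1)).val - j) * padZ a j
            = ∑ j ∈ Finset.range (k + 2), PowerSeries.coeff j MS * b (k + 1 - j) := by
          rw [← Finset.sum_range_reflect]
          apply Finset.sum_congr rfl
          intro j hj
          rw [Finset.mem_range] at hj
          have h1 : k + 2 - 1 - j = k + 1 - j := by omega
          rw [h1]
          by_cases hj0 : j = 0
          · subst hj0
            have h2 : k + 1 - (k + 1 - 0) = 0 := by omega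
            rw [h2, hMSc]
            have h3 : padZ mt 0 = 0 := by
              have h4 : (⟨0, by omega⟩ : Fin (2 * n + 1)) = 0 := by apply Fin.ext; simp
              rw [padZ, dif_pos (by omega : 0 < 2 * n + 1), h4, hm0]
            rw [h3]
            simp
          · have hjk : j ≤ k + 1 := by omega
            have h2 : k + 1 - (k + 1 - j) = j := by omega
            rw [h2]
            have hjN : j < 2 * n + 1 := by omega
            have hMT : padZ mt j = PowerSeries.coeff j MS := by
              rw [padZ, dif_pos hjN, hMSc, if_neg hj0, hmk ⟨j, hjN⟩ (by simpa using hj0)]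
            have hA : padZ a (k + 1 - j) = b (k + 1 - j) := by
              have hlt : k + 1 - j < 2 * n + 1 := by omega
              rw [padZ, dif_pos hlt, ih (k + 1 - j) (by omega) hlt]
            rw [hMT, hA]
        have hne : ((k : ℝ) + 1) ≠ 0 := by positivity
        apply mul_left_cancel₀ hne
        rw [← hEq, hL, ← hbrec]
  funext i
  have hiN := i.isLt
  have hc' : ∀ j : ℕ, padZ c j = PowerSeries.coeff j CS := by
    intro j
    by_cases hj : j < 2 * n + 1
    · rw [padZ, dif_pos hj, hc, hCSc]
    · rw [padZ, dif_neg hj, hCSc, if_neg (by omega)]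
  calc (LTT a *ᵥ c) i = ∑ j ∈ Finset.range (i.val + 1), padZ a (i.val - j) * padZ c j :=
        LTT_mulVec a c i
    _ = ∑ j ∈ Finset.range (i.val + 1), b (i.val - j) * PowerSeries.coeff j CS := by
        apply Finset.sum_congr rfl
        intro j hj
        rw [Finset.mem_range] at hj
        have hlt : i.val - j < 2 * n + 1 := by omega
        rw [hc', padZ, dif_pos hlt, key _ hlt]
    _ = PowerSeries.coeff i.val (CS * B) := by
        rw [PowerSeries.coeff_mul, Finset.Nat.sum_antidiagonal_eq_sum_range_succ_mk]
        apply Finset.sum_congr rfl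
        intro j hj
        rw [mul_comm]
    _ = PowerSeries.coeff i.val DS := by rw [hBCS]
    _ = d i := by rw [hDSc, hd]
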